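/- Fix a ∈ (0, 1/2). Define ρ on the dyadic rationals of [0,1] by: ρ(0,1) = 1; for z < z' (not the pair {0,1}), ρ(z,z') is the sum of the edge lengths along the V-shaped path z, r(z), …, r^k(z) = l^s(z'), …, l(z'), z', where each edge {w, l(w)} or {w, r(w)} with ℓ(w) = n has length a^n. Then for every z of level n ≥ 1, ρ(z,0) + ρ(z,1) = τ_n, where τ_n = a + a² + ⋯ + a^{n-1} + 2a^n. -/

import Mathlib

/-- A rational is dyadic if it can be written as `k / 2^n`. -/
def IsDyadic (q : ℚ) : Prop := ∃ (k : ℤ) (n : ℕ), q = (k : ℚ) / 2 ^ n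

/-- Membership in `Z`, the set of dyadic rationals of `[0,1]`. -/
def InZ (q : ℚ) : Prop := 0 ≤ q ∧ q ≤ 1 ∧ IsDyadic q

/-- The level of a dyadic rational: the least `n` with `q = k / 2^n` for some
integer `k`.  The endpoints `0` and `1` have level `0`. -/
noncomputable def level (q : ℚ) : ℕ := sInf {n : ℕ | ∃ k : ℤ, q = (k : ℚ) / 2 ^ n}

/-- The left neighbor `l(z) = (k-1)/2^n` of `z = k/2^n` (in lowest terms,
`k` odd, `n ≥ 1`); points of level `0` are fixed. -/
noncomputable def lnb (q : ℚ) : ℚ :=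
  if level q = 0 then q else q - (1 / 2 : ℚ) ^ level q

/-- The right neighbor `r(z) = (k+1)/2^n` of `z = k/2^n` (in lowest terms,
`k` odd, `n ≥ 1`); points of level `0` are fixed. -/
noncomputable def rnb (q : ℚ) : ℚ :=
  if level q = 0 then q else q + (1 / 2 : ℚ) ^ level q

/-- `ρ` is the V-path quasi-metric on the dyadic rationals of `[0,1]` with
parameter `a`: it is symmetric, vanishes on the diagonal, is nonnegative on
`Z`, satisfies `ρ(0,1) = 1`, and decomposes along the unique V-shaped path:
for `z < z'` in `Z` the first edge taken from the higher-level endpoint has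
length `a^level`. These properties characterize the sum of edge lengths
`a^{ℓ(w)}` along the V-shaped path joining `z` and `z'`. -/
def IsVPath (a : ℝ) (ρ : ℚ → ℚ → ℝ) : Prop :=
  (∀ z z', ρ z z' = ρ z' z) ∧
  (∀ z, ρ z z = 0) ∧
  (∀ z z', InZ z → InZ z' → 0 ≤ ρ z z') ∧
  ρ 0 1 = 1 ∧
  (∀ z z', InZ z → InZ z' → z < z' → 1 ≤ level z → level z' ≤ level z →
    ρ z z' = a ^ level z + ρ (rnb z) z') ∧
  (∀ z z', InZ z → InZ z' → z < z' → level z < level z' →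
    ρ z z' = ρ z (lnb z') + a ^ level z')

/-- `τ_n = a + a² + ⋯ + a^{n-1} + 2 a^n`. -/
noncomputable def tau (a : ℝ) (n : ℕ) : ℝ :=
  (∑ i ∈ Finset.Ico 1 n, a ^ i) + 2 * a ^ n

/- ### auxiliary lemmas -/

lemma level_le (q : ℚ) (k : ℤ) (n : ℕ) (h : q = (k:ℚ)/2^n) : level q ≤ n :=
  Nat.sInf_le ⟨k, h⟩

lemma level_intCast (k : ℤ) : level (k : ℚ) = 0 :=
  Nat.le_zero.mp (level_le _ k 0 (by simp))

lemma level_zero' : level 0 = 0 := by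
  have := level_intCast 0; simpa using this

lemma level_one' : level 1 = 0 := by
  have := level_intCast 1; simpa using this

lemma level_eq_of_odd (k : ℤ) (n : ℕ) (hk : Odd k) : level ((k : ℚ)/2^n) = n := by
  refine le_antisymm (level_le _ k n rfl) ?_
  refine le_csInf ⟨n, k, rfl⟩ ?_
  rintro m ⟨k', hm⟩
  by_contra hlt
  push_neg at hlt
  have hmq : (k:ℚ) * 2^m = k' * 2^n := by
    field_simp at hm
    linarith
  have hz : k * 2^m = k' * 2^n := by exact_mod_cast hmq
  have h2 : k' * 2^n = (k' * 2^(n-m)) * 2^m := by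
    rw [mul_assoc, ← pow_add]
    congr 2
    omega
  have hk2 : k = k' * 2^(n-m) :=
    mul_right_cancel₀ (pow_ne_zero m two_ne_zero) (hz.trans h2)
  have hd : (2:ℤ) ∣ k := by
    rw [hk2]
    exact Dvd.dvd.mul_left (dvd_pow_self 2 (by omega)) k'
  obtain ⟨t, ht⟩ := hk
  omega

lemma level_rep (q : ℚ) (h : IsDyadic q) : ∃ k : ℤ, q = (k:ℚ)/2^(level q) := by
  have hne : {n : ℕ | ∃ k : ℤ, q = (k:ℚ)/2^n}.Nonempty := by
    obtain ⟨k, n, h⟩ := h; exact ⟨n, k, h⟩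
  exact Nat.sInf_mem hne

lemma half_pow (t : ℤ) (m : ℕ) : ((t + t : ℤ):ℚ)/2^(m+1) = (t:ℚ)/2^m := by
  push_cast
  rw [pow_succ]
  field_simp
  ring

lemma level_rep_odd (q : ℚ) (h : IsDyadic q) (h1 : 1 ≤ level q) :
    ∃ k : ℤ, Odd k ∧ q = (k:ℚ)/2^(level q) := by
  obtain ⟨k, hk⟩ := level_rep q h
  refine ⟨k, ?_, hk⟩
  by_contra hodd
  rw [Int.not_odd_iff_even] at hodd
  obtain ⟨t, ht⟩ := hodd
  obtain ⟨m, hm⟩ : ∃ m, level q = m + 1 := ⟨level q - 1, by omega⟩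
  have hq : q = (t:ℚ)/2^m := by
    rw [hk, ht, hm]; exact half_pow t m
  have := level_le q t _ hq
  omega

lemma inZ_zero : InZ 0 := ⟨le_refl 0, by norm_num, 0, 0, by norm_num⟩
lemma inZ_one : InZ 1 := ⟨by norm_num, le_refl 1, 1, 0, by norm_num⟩

lemma lnb_eq (q : ℚ) (h : level q ≠ 0) : lnb q = q - (1/2:ℚ)^(level q) := if_neg h
lemma rnb_eq (q : ℚ) (h : level q ≠ 0) : rnb q = q + (1/2:ℚ)^(level q) := if_neg h

lemma dyadic_sub (m : ℤ) (j : ℕ) :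
    ((2*m+1 : ℤ):ℚ)/2^(j+1) - (1/2:ℚ)^(j+1) = (m:ℚ)/2^j := by
  rw [one_div_pow]
  push_cast
  field_simp
  ring

lemma dyadic_add (m : ℤ) (j : ℕ) :
    ((2*m+1 : ℤ):ℚ)/2^(j+1) + (1/2:ℚ)^(j+1) = ((m+1:ℤ):ℚ)/2^j := by
  rw [one_div_pow]
  push_cast
  field_simp
  ring

lemma step_add (m : ℤ) (j : ℕ) :
    (m:ℚ)/2^j + (1/2:ℚ)^j = ((m+1:ℤ):ℚ)/2^j := by
  rw [one_div_pow]
  push_cast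
  field_simp

lemma step_sub (m : ℤ) (j : ℕ) :
    ((m+1:ℤ):ℚ)/2^j - (1/2:ℚ)^j = (m:ℚ)/2^j := by
  rw [one_div_pow]
  push_cast
  field_simp
  ring

lemma tau_succ (a : ℝ) (j : ℕ) (hj : 1 ≤ j) :
    tau a (j+1) = tau a j - a^j + 2*a^(j+1) := by
  unfold tau
  rw [Finset.sum_Ico_succ_top hj]
  ring

lemma main_aux (a : ℝ) (ρ : ℚ → ℚ → ℝ) (hρ : IsVPath a ρ) :
    ∀ n, ∀ z, InZ z → level z = n → 1 ≤ n → ρ z 0 + ρ z 1 = tau a n := by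
  obtain ⟨hsym, hdiag, hnn, h01, hR, hL⟩ := hρ
  intro n
  induction n using Nat.strong_induction_on with
  | _ n IH =>
  intro z hz hzn hn1
  obtain ⟨hz0, hz1, hzd⟩ := hz
  obtain ⟨k, hk, hkq⟩ := level_rep_odd z hzd (by omega)
  rw [hzn] at hkq
  have hzne0 : z ≠ 0 := by rintro rfl; rw [level_zero'] at hzn; omega
  have hzne1 : z ≠ 1 := by rintro rfl; rw [level_one'] at hzn; omega
  have hzpos : 0 < z := lt_of_le_of_ne hz0 (Ne.symm hzne0)
  have hzlt1 : z < 1 := lt_of_le_of_ne hz1 hzne1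
  have hpow : (0:ℚ) < 2^n := by positivity
  have hk0 : 0 < k := by
    have h1 : (0:ℚ) < (k:ℚ)/2^n := hkq ▸ hzpos
    have h2 : (0:ℚ) < (k:ℚ) := by
      by_contra hc
      push_neg at hc
      have := div_nonpos_of_nonpos_of_nonneg hc (le_of_lt hpow)
      linarith
    exact_mod_cast h2
  have hkn : k < 2^n := by
    have h1 : (k:ℚ)/2^n < 1 := hkq ▸ hzlt1
    have h2 : (k:ℚ) < 2^n := (div_lt_one hpow).mp h1
    exact_mod_cast h2
  obtain ⟨m, hm⟩ := hk
  obtain ⟨j, hj⟩ : ∃ j, n = j + 1 := ⟨n - 1, by omega⟩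
  have hpow2 : (2:ℤ)^n = 2 * 2^j := by
    rw [hj, pow_succ]; ring
  have hm0 : 0 ≤ m := by omega
  have hmlt : m < 2^j := by omega
  have hjpow : (0:ℚ) < 2^j := by positivity
  have hkq' : z = ((2*m+1 : ℤ):ℚ)/2^(j+1) := by rw [← hj, ← hm]; exact hkq
  have hlevne : level z ≠ 0 := by omega
  have hlnb : lnb z = (m:ℚ)/2^j := by
    rw [lnb_eq z hlevne, hzn, hj, hkq']
    exact dyadic_sub m j
  have hrnb : rnb z = ((m+1:ℤ):ℚ)/2^j := by
    rw [rnb_eq z hlevne, hzn, hj, hkq']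
    exact dyadic_add m j
  -- the two decomposition equations at z
  have e1 : ρ 0 z = ρ 0 (lnb z) + a ^ n := by
    have := hL 0 z inZ_zero ⟨hz0, hz1, hzd⟩ hzpos (by rw [level_zero', hzn]; omega)
    rwa [hzn] at this
  have e2 : ρ z 1 = a ^ n + ρ (rnb z) 1 := by
    have := hR z 1 ⟨hz0, hz1, hzd⟩ inZ_one hzlt1 (by omega) (by rw [level_one', hzn]; omega)
    rwa [hzn] at this
  rcases Nat.eq_zero_or_pos j with hj0 | hjpos'
  · -- base case n = 1 : lnb z = 0, rnb z = 1
    subst hj0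
    have hm00 : m = 0 := by omega
    have hlnb0 : lnb z = 0 := by rw [hlnb, hm00]; norm_num
    have hrnb1 : rnb z = 1 := by rw [hrnb, hm00]; norm_num
    rw [hlnb0] at e1
    rw [hrnb1] at e2
    rw [hdiag 0] at e1
    rw [hdiag 1] at e2
    have : ρ z 0 = a ^ n := by rw [hsym z 0, e1]; ring
    rw [this, e2, hj]
    simp [tau]
    ring
  · -- inductive step : n = j+1 with j ≥ 1
    rcases Int.even_or_odd m with hme | hmo
    · -- m even : parent is rnb z = (m+1)/2^j
      have hmo1 : Odd (m+1) := by
        obtain ⟨t, ht⟩ := hme; exact ⟨t, by omega⟩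
      set w : ℚ := ((m+1:ℤ):ℚ)/2^j with hw
      have hlw : level w = j := level_eq_of_odd (m+1) j hmo1
      have hw0 : 0 ≤ w := by
        rw [hw]; positivity
      have hw1 : w ≤ 1 := by
        rw [hw, div_le_one hjpow]
        have h5 : m + 1 ≤ 2^j := by omega
        exact_mod_cast h5
      have hwZ : InZ w := ⟨hw0, hw1, (m+1), j, hw⟩
      have hwpos : 0 < w := by
        rw [hw]
        apply div_pos _ hjpow
        have h5 : (0:ℤ) < m + 1 := by omega
        exact_mod_cast h5
      have hlnbw : lnb w = lnb z := by
        rw [lnb_eq w (by omega), hlw, hw, step_sub, hlnb]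
      have e3 : ρ 0 w = ρ 0 (lnb w) + a ^ j := by
        have := hL 0 w inZ_zero hwZ hwpos (by rw [level_zero', hlw]; omega)
        rwa [hlw] at this
      have IHw : ρ w 0 + ρ w 1 = tau a j := IH j (by omega) w hwZ hlw hjpos'
      rw [hlnbw] at e3
      rw [hrnb] at e2
      have hs3 : ρ 0 w = ρ w 0 := hsym 0 w
      have han : a ^ n = a ^ (j+1) := by rw [hj]
      rw [hsym z 0, e1, e2, hj, tau_succ a j hjpos']
      linarith
    · -- m odd : parent is lnb z = m/2^j
      set w : ℚ := (m:ℚ)/2^j with hw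
      have hlw : level w = j := level_eq_of_odd m j hmo
      have hw0 : 0 ≤ w := by rw [hw]; positivity
      have hw1 : w < 1 := by
        rw [hw, div_lt_one hjpow]
        exact_mod_cast hmlt
      have hwZ : InZ w := ⟨hw0, le_of_lt hw1, m, j, hw⟩
      have hrnbw : rnb w = rnb z := by
        rw [rnb_eq w (by omega), hlw, hw, step_add, hrnb]
      have e3 : ρ w 1 = a ^ j + ρ (rnb w) 1 := by
        have := hR w 1 hwZ inZ_one hw1 (by omega) (by rw [level_one', hlw]; omega)
        rwa [hlw] at this
      have IHw : ρ w 0 + ρ w 1 = tau a j := IH j (by omega) w hwZ hlw hjpos'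
      rw [hrnbw] at e3
      rw [hlnb] at e1
      have hs3 : ρ 0 w = ρ w 0 := hsym 0 w
      have han : a ^ n = a ^ (j+1) := by rw [hj]
      rw [hsym z 0, e1, e2, hj, tau_succ a j hjpos']
      linarith

/-- Fact 4: for the V-path quasi-metric with parameter `a ∈ (0,1/2)` and any
`z ∈ Z` of level `n ≥ 1`, `ρ(z,0) + ρ(z,1) = τ_n`. -/
theorem vpath_tent_sum (a : ℝ) (ha0 : 0 < a) (ha : a < 1 / 2)
    (ρ : ℚ → ℚ → ℝ) (hρ : IsVPath a ρ)
    (z : ℚ) (hz : InZ z) (hl : 1 ≤ level z) :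
    ρ z 0 + ρ z 1 = tau a (level z) := by
  exact main_aux a ρ hρ (level z) z hz rfl hl
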